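/- arXiv:1208.5617 — 3 statements merged into one kernel-verified Lean document; each statement's English description precedes it below -/
import Mathlib

section
/- A Frobenius group F of order q^2(q-1), where q = 2^p with p an odd prime, whose Frobenius kernel has order q^2 and whose point stabilizers are cyclic of order q-1, is not metabelian if the kernel is nonabelian of exponent 4 with center of order q. -/
open scoped commutatorElement

/-- a Frobenius group `F` of order `q²(q-1)`, `q = 2^p` with `p` an odd prime,
with kernel `K` of order `q²` (a 2-group of exponent 4, nonabelian, with centre of order `q`)
and cyclic point stabilizers of order `q-1`, is not metabelian. -/
theorem stmt_8 (p : ℕ) (hp : p.Prime) (hodd : Odd p)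
    {F : Type*} [Group F] [Fintype F]
    (q : ℕ) (hq : q = 2 ^ p)
    (hcard : Fintype.card F = q ^ 2 * (q - 1))
    (K : Subgroup F) (hKnormal : K.Normal)
    (hKcard : Nat.card K = q ^ 2)
    (hKexp : Monoid.exponent K = 4)
    (hKcenter : Nat.card (Subgroup.center K) = q)
    (hKnonab : ∃ a b : K, a * b ≠ b * a)
    (H : Subgroup F) (hHcyc : IsCyclic H) (hHcard : Nat.card H = q - 1)
    (hcompl : K ⊓ H = ⊥ ∧ K ⊔ H = ⊤)
    (hfrob : ∀ g : F, g ∉ H → H ⊓ Subgroup.map (MulAut.conj g).toMonoidHom H = ⊥) :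
    derivedSeries F 2 ≠ ⊥ := by
  intro hbot
  -- numeric facts
  have hp3 : 3 ≤ p := by
    have h2 : 2 ≤ p := hp.two_le
    have hne : p ≠ 2 := by
      rintro rfl
      exact absurd hodd (by decide)
    omega
  have hq8 : 8 ≤ q := by
    have : 2 ^ 3 ≤ 2 ^ p := Nat.pow_le_pow_right (by norm_num) hp3
    simpa [hq] using this
  have h4q : 4 ∣ q := by
    rw [hq]
    exact dvd_trans (by norm_num : (4:ℕ) ∣ 2 ^ 3) (pow_dvd_pow 2 hp3)
  -- elements of K have order dividing 4
  have key4 : ∀ z : F, z ∈ K → z ^ 4 = 1 := by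
    intro z hz
    have h1 : (⟨z, hz⟩ : K) ^ 4 = 1 := by
      rw [← hKexp]; exact Monoid.pow_exponent_eq_one _
    simpa using congrArg Subtype.val h1
  -- no nontrivial element of K commutes with all of H
  have key3 : ∀ y : F, y ∈ K → (∀ h : F, h ∈ H → y * h = h * y) → y = 1 := by
    intro y hyK hyc
    by_cases hyH : y ∈ H
    · have : y ∈ K ⊓ H := ⟨hyK, hyH⟩
      rw [hcompl.1] at this
      exact this
    · exfalso
      have hmap : Subgroup.map (MulAut.conj y).toMonoidHom H = H := by
        apply le_antisymm
        · rintro _ ⟨h, hh, rfl⟩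
          have : (MulAut.conj y).toMonoidHom h = h := by
            simp only [MulEquiv.coe_toMonoidHom, MulAut.conj_apply]
            rw [hyc h hh]
            group
          rw [this]; exact hh
        · intro h hh
          refine ⟨h, hh, ?_⟩
          simp only [MulEquiv.coe_toMonoidHom, MulAut.conj_apply]
          rw [hyc h hh]
          group
      have := hfrob y hyH
      rw [hmap, inf_idem] at this
      have hc : Nat.card H = 1 := by rw [this]; simp
      rw [hHcard] at hc
      omega
  -- the abelian normal subgroup N = K ⊓ F'
  set D := derivedSeries F 1 with hD
  have hDn : D.Normal := derivedSeries_normal F 1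
  set N := K ⊓ D with hNdef
  have hNn : N.Normal := by
    constructor
    rintro n ⟨h1, h2⟩ g
    exact ⟨hKnormal.conj_mem n h1 g, hDn.conj_mem n h2 g⟩
  have hDD : ⁅D, D⁆ = (⊥ : Subgroup F) := by
    rw [← derivedSeries_succ]; exact hbot
  have hNcomm : ∀ a b : F, a ∈ N → b ∈ N → a * b = b * a := by
    intro a b ha hb
    have h1 : ⁅a, b⁆ ∈ (⊥ : Subgroup F) := by
      rw [← hDD]
      exact Subgroup.commutator_mem_commutator ha.2 hb.2
    rw [Subgroup.mem_bot] at h1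
    exact (commutatorElement_eq_one_iff_mul_comm.mp h1)
  letI : CommGroup ↥N :=
    { (inferInstance : Group ↥N) with
      mul_comm := fun a b => Subtype.ext (hNcomm a b a.2 b.2) }
  haveI : Fintype ↥H := Fintype.ofFinite _
  have hcardH : Fintype.card ↥H = q - 1 := by
    rw [← Nat.card_eq_fintype_card]; exact hHcard
  -- main claim : K ≤ N
  have hKN : ∀ x : F, x ∈ K → x ∈ N := by
    intro x hx
    have hcmem : ∀ h : ↥H, x⁻¹ * ↑h * x * (↑h)⁻¹ ∈ N := by
      intro h
      constructor
      · have h1 : (x⁻¹ * ((h : F) * x * (h : F)⁻¹)) ∈ K :=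
          K.mul_mem (K.inv_mem hx) (hKnormal.conj_mem x hx (h : F))
        have h2 : x⁻¹ * ((h : F) * x * (h : F)⁻¹) = x⁻¹ * ↑h * x * (↑h)⁻¹ := by group
        rwa [h2] at h1
      · have h1 : ⁅x⁻¹, (h : F)⁆ ∈ ⁅(⊤ : Subgroup F), ⊤⁆ :=
          Subgroup.commutator_mem_commutator (Subgroup.mem_top _) (Subgroup.mem_top _)
        have h2 : D = ⁅(⊤ : Subgroup F), ⊤⁆ := by
          rw [hD]
          rw [show (1 : ℕ) = 0 + 1 from rfl, derivedSeries_succ, derivedSeries_zero]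
        rw [← h2] at h1
        have h3 : ⁅x⁻¹, (h : F)⁆ = x⁻¹ * ↑h * x * (↑h)⁻¹ := by
          rw [commutatorElement_def]; group
        rwa [h3] at h1
    set c : ↥H → ↥N := fun h => ⟨x⁻¹ * ↑h * x * (↑h)⁻¹, hcmem h⟩ with hc
    have hψmem : ∀ (g : ↥H) (w : ↥N), (g : F) * ↑w * (g : F)⁻¹ ∈ N := fun g w =>
      hNn.conj_mem _ w.2 _
    set ψ : ↥H → ↥N →* ↥N := fun g =>
      { toFun := fun w => ⟨(g : F) * ↑w * (g : F)⁻¹, hψmem g w⟩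
        map_one' := by apply Subtype.ext; simp
        map_mul' := by intro a b; apply Subtype.ext; push_cast; group } with hψ
    set d : ↥N := ∏ h : ↥H, c h with hd
    have hcocycle : ∀ g h : ↥H, c (g * h) = c g * ψ g (c h) := by
      intro g h
      apply Subtype.ext
      show x⁻¹ * ↑(g * h) * x * (↑(g * h) : F)⁻¹ = _
      push_cast
      show _ = (x⁻¹ * ↑g * x * (↑g)⁻¹) * ((g : F) * (x⁻¹ * ↑h * x * (↑h)⁻¹) * (g : F)⁻¹)
      group
    have hdeq : ∀ g : ↥H, d = (c g) ^ (Fintype.card ↥H) * ψ g d := by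
      intro g
      have e1 : d = ∏ h : ↥H, c (g * h) := (Equiv.prod_comp (Equiv.mulLeft g) c).symm
      calc d = ∏ h : ↥H, c (g * h) := e1
        _ = ∏ h : ↥H, (c g * ψ g (c h)) := by
            apply Finset.prod_congr rfl; intro h _; exact hcocycle g h
        _ = (∏ _h : ↥H, c g) * ∏ h : ↥H, ψ g (c h) := Finset.prod_mul_distrib
        _ = (c g) ^ (Fintype.card ↥H) * ψ g d := by
            rw [Finset.prod_const, Finset.card_univ, ← map_prod]
    have hc4 : ∀ g : ↥H, (c g) ^ 4 = 1 := by
      intro g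
      apply Subtype.ext
      have := key4 _ (hcmem g).1
      simpa using this
    have hcg : ∀ g : ↥H, c g = ψ g d * d⁻¹ := by
      intro g
      have hmod : Fintype.card ↥H % 4 = 3 := by rw [hcardH]; omega
      have hcn : (c g) ^ (Fintype.card ↥H) = (c g)⁻¹ := by
        have hrep : Fintype.card ↥H = 4 * (Fintype.card ↥H / 4) + 3 := by omega
        rw [hrep, pow_add, pow_mul, hc4, one_pow, one_mul]
        have : (c g) ^ 3 * (c g) = 1 := by
          rw [← pow_succ]; exact hc4 g
        calc (c g) ^ 3 = (c g) ^ 3 * ((c g) * (c g)⁻¹) := by group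
          _ = ((c g) ^ 3 * (c g)) * (c g)⁻¹ := by group
          _ = (c g)⁻¹ := by rw [this, one_mul]
      have h1 := hdeq g
      rw [hcn] at h1
      have h3 : c g * d = (ψ g) d := by
        conv_lhs => rw [h1]
        group
      rw [← h3]
      group
    -- the H-fixed element y
    have hdK : (d : F) ∈ K := d.2.1
    set y : F := x * (↑d)⁻¹ with hy
    have hyK : y ∈ K := K.mul_mem hx (K.inv_mem hdK)
    have hycomm : ∀ h : F, h ∈ H → y * h = h * y := by
      intro h hh
      have hcg' : x⁻¹ * h * x * h⁻¹ = (h * ↑d * h⁻¹) * (↑d : F)⁻¹ := by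
        have := congrArg Subtype.val (hcg ⟨h, hh⟩)
        exact this
      have hdinvN : (↑d : F)⁻¹ ∈ N := N.inv_mem d.2
      have hcd : (↑d : F)⁻¹ * (h * (↑d : F)⁻¹ * h⁻¹) = (h * (↑d : F)⁻¹ * h⁻¹) * (↑d : F)⁻¹ :=
        hNcomm _ _ hdinvN (hNn.conj_mem _ hdinvN h)
      have step : h * y * h⁻¹ = y := by
        have e1 : h * y * h⁻¹ = x * ((x⁻¹ * h * x * h⁻¹) * (h * (↑d : F)⁻¹ * h⁻¹)) := by
          rw [hy]; group
        rw [e1, hcg']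
        calc x * ((h * ↑d * h⁻¹ * (↑d : F)⁻¹) * (h * (↑d : F)⁻¹ * h⁻¹))
            = x * (h * ↑d * h⁻¹) * ((↑d : F)⁻¹ * (h * (↑d : F)⁻¹ * h⁻¹)) := by group
          _ = x * (h * ↑d * h⁻¹) * ((h * (↑d : F)⁻¹ * h⁻¹) * (↑d : F)⁻¹) := by rw [hcd]
          _ = x * (↑d : F)⁻¹ := by group
          _ = y := by rw [hy]
      have := congrArg (fun z => z * h) step
      calc y * h = (h * y * h⁻¹) * h := by rw [step]
        _ = h * y := by group
    have hy1 : y = 1 := key3 y hyK hycomm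
    have hxd : x = (↑d : F) := by
      rw [hy] at hy1
      exact mul_inv_eq_one.mp hy1
    rw [hxd]
    exact d.2
  -- conclude : K is abelian, contradiction
  obtain ⟨a, b, hab⟩ := hKnonab
  apply hab
  apply Subtype.ext
  push_cast
  exact hNcomm _ _ (hKN _ a.2) (hKN _ b.2)
end

section
/- Let G be a torsion-free locally nilpotent group and M ≤ G a subgroup such that the isolator I_G(M) equals G. Then for every i ≥ 0, the i-th derived subgroup G^(i) is contained in the isolator I_G(M^(i)); in particular, if M is solvable of derived length d, then G is solvable of derived length at most d. -/
/-- The isolator of a subgroup `M` of `G`: elements having a positive power in `M`. -/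
def isolator {G : Type*} [Group G] (M : Subgroup G) : Set G :=
  {g : G | ∃ n : ℕ, 0 < n ∧ g ^ n ∈ M}

open Subgroup hiding lowerCentralSeries
open scoped commutatorElement

section CommCalc
variable {K : Type*} [Group K]

/-- right multiplicativity of commutator when `⁅a,v⁆` is central. -/
lemma comm_mul_right (a u v : K) (hc : ∀ w : K, ⁅a, v⁆ * w = w * ⁅a, v⁆) :
    ⁅a, u * v⁆ = ⁅a, u⁆ * ⁅a, v⁆ := by
  simp only [commutatorElement_def] at hc ⊢
  calc a * (u * v) * a⁻¹ * (u * v)⁻¹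
      = (a * u * a⁻¹) * ((a * v * a⁻¹ * v⁻¹) * u⁻¹) := by group
    _ = (a * u * a⁻¹) * (u⁻¹ * (a * v * a⁻¹ * v⁻¹)) := by rw [hc]
    _ = a * u * a⁻¹ * u⁻¹ * (a * v * a⁻¹ * v⁻¹) := by group

/-- left multiplicativity of commutator when `⁅b,u⁆` is central. -/
lemma comm_mul_left (a b u : K) (hc : ∀ w : K, ⁅b, u⁆ * w = w * ⁅b, u⁆) :
    ⁅a * b, u⁆ = ⁅b, u⁆ * ⁅a, u⁆ := by
  simp only [commutatorElement_def] at hc ⊢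
  calc a * b * u * (a * b)⁻¹ * u⁻¹
      = a * ((b * u * b⁻¹ * u⁻¹) * (u * a⁻¹ * u⁻¹)) := by group
    _ = a * ((u * a⁻¹ * u⁻¹) * (b * u * b⁻¹ * u⁻¹)) := by rw [hc]
    _ = (a * u * a⁻¹ * u⁻¹) * (b * u * b⁻¹ * u⁻¹) := by group
    _ = (b * u * b⁻¹ * u⁻¹) * (a * u * a⁻¹ * u⁻¹) := by rw [← hc]

lemma comm_pow_right (a u : K) (hc : ∀ w : K, ⁅a, u⁆ * w = w * ⁅a, u⁆) (t : ℕ) :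
    ⁅a, u ^ t⁆ = ⁅a, u⁆ ^ t := by
  induction t with
  | zero => simp
  | succ t ih => rw [pow_succ, comm_mul_right a (u ^ t) u hc, ih, pow_succ]

lemma comm_pow_left (a u : K) (hc : ∀ w : K, ⁅a, u⁆ * w = w * ⁅a, u⁆) (k : ℕ) :
    ⁅a ^ k, u⁆ = ⁅a, u⁆ ^ k := by
  induction k with
  | zero => simp
  | succ k ih => rw [pow_succ, comm_mul_left (a ^ k) a u hc, ih, pow_succ,
      show ⁅a,u⁆ * ⁅a,u⁆^k = ⁅a,u⁆^k * ⁅a,u⁆ from (Commute.refl _).pow_right k]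

lemma comm_strip_left (h z w : K) (hz : ∀ g : K, z * g = g * z) :
    ⁅h * z, w⁆ = ⁅h, w⁆ := by
  simp only [commutatorElement_def]
  calc h * z * w * (h * z)⁻¹ * w⁻¹
      = h * (z * w) * z⁻¹ * h⁻¹ * w⁻¹ := by group
    _ = h * (w * z) * z⁻¹ * h⁻¹ * w⁻¹ := by rw [hz]
    _ = h * w * h⁻¹ * w⁻¹ := by group

lemma comm_strip_right (v h z : K) (hz : ∀ g : K, z * g = g * z) :
    ⁅v, h * z⁆ = ⁅v, h⁆ := by
  simp only [commutatorElement_def]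
  calc v * (h * z) * v⁻¹ * (h * z)⁻¹
      = v * h * (z * v⁻¹) * z⁻¹ * h⁻¹ := by group
    _ = v * h * (v⁻¹ * z) * z⁻¹ * h⁻¹ := by rw [hz]
    _ = v * h * v⁻¹ * h⁻¹ := by group

end CommCalc

universe u

lemma lcs_map_surj {K Q : Type u} [Group K] [Group Q] (f : K →* Q)
    (hf : Function.Surjective f) (i : ℕ) :
    Subgroup.map f (lowerCentralSeries (⊤ : Subgroup K) i) = lowerCentralSeries (⊤ : Subgroup Q) i := by
  induction i with
  | zero => exact Subgroup.map_top_of_surjective f hf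
  | succ i ih =>
      show Subgroup.map f ⁅lowerCentralSeries (⊤ : Subgroup K) i, ⊤⁆ = ⁅lowerCentralSeries (⊤ : Subgroup Q) i, ⊤⁆
      rw [Subgroup.map_commutator, ih, Subgroup.map_top_of_surjective f hf]

theorem key (c : ℕ) :
    ∀ (K : Type u) [Group K] (x y : K),
      Subgroup.closure {x, y} = ⊤ → ∀ (H : Subgroup K) (m n : ℕ), 0 < m → 0 < n →
      x ^ m ∈ H → y ^ n ∈ H → lowerCentralSeries (⊤ : Subgroup K) c = ⊥ →
      ∀ g : K, ∃ k : ℕ, 0 < k ∧ g ^ k ∈ H := by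
  induction c with
  | zero =>
      intro K _ x y hgen H m n hm hn hxm hyn hbot g
      have hg : g ∈ (⊥ : Subgroup K) := hbot ▸ Subgroup.mem_top g
      exact ⟨1, one_pos, by rw [Subgroup.mem_bot] at hg; simp [hg, H.one_mem]⟩
  | succ c ih =>
      intro K _ x y hgen H m n hm hn hxm hyn hbot g
      match c, ih, hbot with
      | 0, _, hbot =>
        -- abelian case
        have hcomm : ∀ u v : K, u * v = v * u := by
          intro u v
          have h1 : ⁅u, v⁆ ∈ lowerCentralSeries (⊤ : Subgroup K) 1 :=
            Subgroup.commutator_mem_commutator (Subgroup.mem_top u) (Subgroup.mem_top v)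
          rw [hbot, Subgroup.mem_bot] at h1
          exact (commutatorElement_eq_one_iff_commute.mp h1).eq
        let W : Subgroup K :=
          { carrier := {g | ∃ k : ℕ, 0 < k ∧ g ^ k ∈ H}
            one_mem' := ⟨1, one_pos, by simpa using H.one_mem⟩
            mul_mem' := by
              rintro g g' ⟨k, hk, hgk⟩ ⟨l, hl, hgl⟩
              refine ⟨k * l, Nat.mul_pos hk hl, ?_⟩
              rw [Commute.mul_pow (hcomm g g'), pow_mul, mul_comm k l, pow_mul]
              exact H.mul_mem (H.pow_mem hgk l) (H.pow_mem hgl k)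
            inv_mem' := by
              rintro g ⟨k, hk, hgk⟩
              exact ⟨k, hk, by rw [inv_pow]; exact H.inv_mem hgk⟩ }
        have htop : (⊤ : Subgroup K) ≤ W := by
          rw [← hgen]
          refine (Subgroup.closure_le _).mpr ?_
          rintro a (rfl | rfl)
          · exact ⟨m, hm, hxm⟩
          · exact ⟨n, hn, hyn⟩
        exact htop (Subgroup.mem_top g)
      | (d+1), ih, hbot =>
        set Z := lowerCentralSeries (⊤ : Subgroup K) (d + 1) with hZdef
        have hZc : ∀ z ∈ Z, ∀ w : K, z * w = w * z := by
          intro z hz w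
          have h1 : ⁅z, w⁆ ∈ lowerCentralSeries (⊤ : Subgroup K) (d + 2) :=
            Subgroup.commutator_mem_commutator hz (Subgroup.mem_top w)
          rw [hbot, Subgroup.mem_bot] at h1
          exact (commutatorElement_eq_one_iff_commute.mp h1).eq
        haveI : Z.Normal := Subgroup.lowerCentralSeries_normal ⊤ (d + 1)
        let f : K →* K ⧸ Z := QuotientGroup.mk' Z
        have hf : Function.Surjective f := QuotientGroup.mk'_surjective Z
        have hQbot : lowerCentralSeries (⊤ : Subgroup (K ⧸ Z)) (d + 1) = ⊥ := by
          rw [← lcs_map_surj f hf, ← hZdef, Subgroup.map_eq_bot_iff, QuotientGroup.ker_mk']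
        have hQgen : Subgroup.closure {f x, f y} = ⊤ := by
          have h1 := Subgroup.map_top_of_surjective f hf
          rw [← hgen, MonoidHom.map_closure, Set.image_pair] at h1
          exact h1
        have hQ := ih (K ⧸ Z) (f x) (f y) hQgen (Subgroup.map f H) m n hm hn
          (Subgroup.mem_map.mpr ⟨x ^ m, hxm, map_pow f x m⟩)
          (Subgroup.mem_map.mpr ⟨y ^ n, hyn, map_pow f y n⟩) hQbot
        have hHZ : ∀ g : K, ∃ k : ℕ, 0 < k ∧ ∃ h ∈ H, ∃ z ∈ Z, g ^ k = h * z := by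
          intro g
          obtain ⟨k, hk, hq⟩ := hQ (f g)
          rw [← map_pow] at hq
          obtain ⟨h, hh, hfh⟩ := Subgroup.mem_map.mp hq
          refine ⟨k, hk, h, hh, h⁻¹ * g ^ k, ?_, by group⟩
          have : h⁻¹ * g ^ k ∈ f.ker := by
            rw [MonoidHom.mem_ker, map_mul, map_inv, hfh, inv_mul_cancel]
          rwa [show f.ker = Z from QuotientGroup.ker_mk' Z] at this
        -- the central subgroup Z is contained in the isolator of H
        let W : Subgroup K :=
          { carrier := {z | z ∈ Z ∧ ∃ k : ℕ, 0 < k ∧ z ^ k ∈ H}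
            one_mem' := ⟨Z.one_mem, 1, one_pos, by simpa using H.one_mem⟩
            mul_mem' := by
              rintro z z' ⟨hz, k, hk, hzk⟩ ⟨hz', l, hl, hzl⟩
              refine ⟨Z.mul_mem hz hz', k * l, Nat.mul_pos hk hl, ?_⟩
              rw [Commute.mul_pow (hZc z hz z'), pow_mul, mul_comm k l, pow_mul]
              exact H.mul_mem (H.pow_mem hzk l) (H.pow_mem hzl k)
            inv_mem' := by
              rintro z ⟨hz, k, hk, hzk⟩
              exact ⟨Z.inv_mem hz, k, hk, by rw [inv_pow]; exact H.inv_mem hzk⟩ }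
        have hZW : Z ≤ W := by
          show ⁅lowerCentralSeries (⊤ : Subgroup K) d, (⊤ : Subgroup K)⁆ ≤ W
          refine Subgroup.commutator_le.mpr ?_
          intro a ha u _
          have hauZ : ⁅a, u⁆ ∈ Z := Subgroup.commutator_mem_commutator ha (Subgroup.mem_top u)
          have hcen : ∀ v : K, ∀ w : K, ⁅a, v⁆ * w = w * ⁅a, v⁆ := fun v w =>
            hZc ⁅a, v⁆ (Subgroup.commutator_mem_commutator ha (Subgroup.mem_top v)) w
          obtain ⟨k, hk, h₁, hh₁, z₁, hz₁, hak⟩ := hHZ a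
          obtain ⟨t, ht, h₂, hh₂, z₂, hz₂, hut⟩ := hHZ u
          refine ⟨hauZ, t * k, Nat.mul_pos ht hk, ?_⟩
          have e1 : ⁅a ^ k, u ^ t⁆ = ⁅a, u⁆ ^ (t * k) := by
            rw [comm_pow_left a (u ^ t) (hcen (u ^ t)), comm_pow_right a u (hcen u), ← pow_mul]
          rw [← e1, hak, hut,
            comm_strip_left h₁ z₁ (h₂ * z₂) (hZc z₁ hz₁),
            comm_strip_right h₁ h₂ z₂ (hZc z₂ hz₂), commutatorElement_def]
          exact H.mul_mem (H.mul_mem (H.mul_mem hh₁ hh₂) (H.inv_mem hh₁)) (H.inv_mem hh₂)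
        obtain ⟨k, hk, h, hh, z, hz, hgk⟩ := hHZ g
        obtain ⟨-, s, hs, hzs⟩ := hZW hz
        refine ⟨k * s, Nat.mul_pos hk hs, ?_⟩
        rw [pow_mul, hgk, Commute.mul_pow ((hZc z hz h).symm)]
        exact H.mul_mem (H.pow_mem hh s) hzs

theorem key2' (c : ℕ)
    (key : ∀ (c : ℕ) (K : Type u) [Group K] (x y : K),
      Subgroup.closure {x, y} = ⊤ → ∀ (H : Subgroup K) (m n : ℕ), 0 < m → 0 < n →
      x ^ m ∈ H → y ^ n ∈ H → lowerCentralSeries (⊤ : Subgroup K) c = ⊥ →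
      ∀ g : K, ∃ k : ℕ, 0 < k ∧ g ^ k ∈ H) :
    ∀ (K : Type u) [Group K] (x y : K),
      Subgroup.closure {x, y} = ⊤ → ∀ (H : Subgroup K) (m n : ℕ), 0 < m → 0 < n →
      x ^ m ∈ H → y ^ n ∈ H → lowerCentralSeries (⊤ : Subgroup K) c = ⊥ →
      ∀ g ∈ ⁅(⊤ : Subgroup K), (⊤ : Subgroup K)⁆, ∃ k : ℕ, 0 < k ∧ g ^ k ∈ ⁅H, H⁆ := by
  induction c with
  | zero =>
      intro K _ x y hgen H m n hm hn hxm hyn hbot g hg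
      have hg : g ∈ (⊥ : Subgroup K) := hbot ▸ Subgroup.mem_top g
      exact ⟨1, one_pos, by rw [Subgroup.mem_bot] at hg; simp [hg, Subgroup.one_mem]⟩
  | succ c ih =>
      intro K _ x y hgen H m n hm hn hxm hyn hbot g hg
      match c, ih, hbot with
      | 0, _, hbot =>
        have : g ∈ lowerCentralSeries (⊤ : Subgroup K) 1 := hg
        rw [hbot, Subgroup.mem_bot] at this
        exact ⟨1, one_pos, by simp [this, Subgroup.one_mem]⟩
      | (d+1), ih, hbot =>
        set Z := lowerCentralSeries (⊤ : Subgroup K) (d + 1) with hZdef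
        have hZc : ∀ z ∈ Z, ∀ w : K, z * w = w * z := by
          intro z hz w
          have h1 : ⁅z, w⁆ ∈ lowerCentralSeries (⊤ : Subgroup K) (d + 2) :=
            Subgroup.commutator_mem_commutator hz (Subgroup.mem_top w)
          rw [hbot, Subgroup.mem_bot] at h1
          exact (commutatorElement_eq_one_iff_commute.mp h1).eq
        haveI : Z.Normal := Subgroup.lowerCentralSeries_normal ⊤ (d + 1)
        let f : K →* K ⧸ Z := QuotientGroup.mk' Z
        have hf : Function.Surjective f := QuotientGroup.mk'_surjective Z
        have hQbot : lowerCentralSeries (⊤ : Subgroup (K ⧸ Z)) (d + 1) = ⊥ := by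
          rw [← lcs_map_surj f hf, ← hZdef, Subgroup.map_eq_bot_iff, QuotientGroup.ker_mk']
        have hQgen : Subgroup.closure {f x, f y} = ⊤ := by
          have h1 := Subgroup.map_top_of_surjective f hf
          rw [← hgen, MonoidHom.map_closure, Set.image_pair] at h1
          exact h1
        have hfg : f g ∈ ⁅(⊤ : Subgroup (K ⧸ Z)), (⊤ : Subgroup (K ⧸ Z))⁆ := by
          have h1 : f g ∈ Subgroup.map f ⁅(⊤ : Subgroup K), (⊤ : Subgroup K)⁆ :=
            Subgroup.mem_map_of_mem f hg
          rwa [Subgroup.map_commutator, Subgroup.map_top_of_surjective f hf] at h1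
        obtain ⟨k, hk, hq⟩ := ih (K ⧸ Z) (f x) (f y) hQgen (Subgroup.map f H) m n hm hn
          (Subgroup.mem_map.mpr ⟨x ^ m, hxm, map_pow f x m⟩)
          (Subgroup.mem_map.mpr ⟨y ^ n, hyn, map_pow f y n⟩) hQbot (f g) hfg
        rw [← Subgroup.map_commutator, ← map_pow] at hq
        obtain ⟨h, hh, hfh⟩ := Subgroup.mem_map.mp hq
        have hzZ : h⁻¹ * g ^ k ∈ Z := by
          have : h⁻¹ * g ^ k ∈ f.ker := by
            rw [MonoidHom.mem_ker, map_mul, map_inv, hfh, inv_mul_cancel]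
          rwa [show f.ker = Z from QuotientGroup.ker_mk' Z] at this
        have hgk : g ^ k = h * (h⁻¹ * g ^ k) := by group
        -- every element of H has a power in H; used for generators of Z
        have hKH := key (d + 2) K x y hgen H m n hm hn hxm hyn hbot
        let W : Subgroup K :=
          { carrier := {z | z ∈ Z ∧ ∃ k : ℕ, 0 < k ∧ z ^ k ∈ ⁅H, H⁆}
            one_mem' := ⟨Z.one_mem, 1, one_pos, by simpa using Subgroup.one_mem _⟩
            mul_mem' := by
              rintro z z' ⟨hz, k, hk, hzk⟩ ⟨hz', l, hl, hzl⟩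
              refine ⟨Z.mul_mem hz hz', k * l, Nat.mul_pos hk hl, ?_⟩
              rw [Commute.mul_pow (hZc z hz z'), pow_mul, mul_comm k l, pow_mul]
              exact Subgroup.mul_mem _ (Subgroup.pow_mem _ hzk l) (Subgroup.pow_mem _ hzl k)
            inv_mem' := by
              rintro z ⟨hz, k, hk, hzk⟩
              exact ⟨Z.inv_mem hz, k, hk, by rw [inv_pow]; exact Subgroup.inv_mem _ hzk⟩ }
        have hZW : Z ≤ W := by
          show ⁅lowerCentralSeries (⊤ : Subgroup K) d, (⊤ : Subgroup K)⁆ ≤ W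
          refine Subgroup.commutator_le.mpr ?_
          intro a ha u _
          have hauZ : ⁅a, u⁆ ∈ Z := Subgroup.commutator_mem_commutator ha (Subgroup.mem_top u)
          have hcen : ∀ v : K, ∀ w : K, ⁅a, v⁆ * w = w * ⁅a, v⁆ := fun v w =>
            hZc ⁅a, v⁆ (Subgroup.commutator_mem_commutator ha (Subgroup.mem_top v)) w
          obtain ⟨k, hk, hak⟩ := hKH a
          obtain ⟨t, ht, hut⟩ := hKH u
          refine ⟨hauZ, t * k, Nat.mul_pos ht hk, ?_⟩
          have e1 : ⁅a ^ k, u ^ t⁆ = ⁅a, u⁆ ^ (t * k) := by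
            rw [comm_pow_left a (u ^ t) (hcen (u ^ t)), comm_pow_right a u (hcen u), ← pow_mul]
          rw [← e1]
          exact Subgroup.commutator_mem_commutator hak hut
        obtain ⟨-, s, hs, hzs⟩ := hZW hzZ
        refine ⟨k * s, Nat.mul_pos hk hs, ?_⟩
        rw [pow_mul, hgk, Commute.mul_pow ((hZc _ hzZ h).symm)]
        exact Subgroup.mul_mem _ (Subgroup.pow_mem _ hh s) hzs


section GLevel
variable {G : Type u} [Group G]

lemma pair_lcs (hln : ∀ S : Finset G, Group.IsNilpotent (Subgroup.closure (S : Set G)))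
    (x y : G) : ∃ c, lowerCentralSeries (⊤ : Subgroup (Subgroup.closure ({x, y} : Set G))) c = ⊥ := by
  classical
  have h := hln {x, y}
  rw [Subgroup.nilpotent_iff_lowerCentralSeries] at h
  have e : (({x, y} : Finset G) : Set G) = ({x, y} : Set G) := by simp
  rw [e] at h
  exact h

lemma iso_mul (hln : ∀ S : Finset G, Group.IsNilpotent (Subgroup.closure (S : Set G)))
    {N : Subgroup G} {x y : G} (hx : x ∈ isolator N) (hy : y ∈ isolator N) :
    x * y ∈ isolator N := by
  obtain ⟨m, hm, hxm⟩ := hx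
  obtain ⟨n, hn, hyn⟩ := hy
  set K := Subgroup.closure ({x, y} : Set G) with hK
  have hxK : x ∈ K := Subgroup.subset_closure (by simp)
  have hyK : y ∈ K := Subgroup.subset_closure (by simp)
  have hgen : Subgroup.closure {(⟨x, hxK⟩ : K), ⟨y, hyK⟩} = ⊤ := by
    have h := Subgroup.closure_preimage_eq_top ({x, y} : Set G)
    have e : (K.subtype ⁻¹' ({x, y} : Set G)) = {(⟨x, hxK⟩ : K), ⟨y, hyK⟩} := by
      ext g; simp [Subtype.ext_iff]
    rw [← e]
    exact h
  obtain ⟨c, hc⟩ := pair_lcs hln x y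
  have hxm' : (⟨x, hxK⟩ : K) ^ m ∈ N.subgroupOf K := by
    rw [Subgroup.mem_subgroupOf]; simpa using hxm
  have hyn' : (⟨y, hyK⟩ : K) ^ n ∈ N.subgroupOf K := by
    rw [Subgroup.mem_subgroupOf]; simpa using hyn
  obtain ⟨k, hk, hgk⟩ := key c K ⟨x, hxK⟩ ⟨y, hyK⟩ hgen (N.subgroupOf K) m n hm hn
    hxm' hyn' hc (⟨x, hxK⟩ * ⟨y, hyK⟩)
  refine ⟨k, hk, ?_⟩
  have := Subgroup.mem_subgroupOf.mp hgk
  simpa using this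

lemma iso_comm (hln : ∀ S : Finset G, Group.IsNilpotent (Subgroup.closure (S : Set G)))
    {N : Subgroup G} {x y : G} (hx : x ∈ isolator N) (hy : y ∈ isolator N) :
    ⁅x, y⁆ ∈ isolator ⁅N, N⁆ := by
  obtain ⟨m, hm, hxm⟩ := hx
  obtain ⟨n, hn, hyn⟩ := hy
  set K := Subgroup.closure ({x, y} : Set G) with hK
  have hxK : x ∈ K := Subgroup.subset_closure (by simp)
  have hyK : y ∈ K := Subgroup.subset_closure (by simp)
  have hgen : Subgroup.closure {(⟨x, hxK⟩ : K), ⟨y, hyK⟩} = ⊤ := by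
    have h := Subgroup.closure_preimage_eq_top ({x, y} : Set G)
    have e : (K.subtype ⁻¹' ({x, y} : Set G)) = {(⟨x, hxK⟩ : K), ⟨y, hyK⟩} := by
      ext g; simp [Subtype.ext_iff]
    rw [← e]
    exact h
  obtain ⟨c, hc⟩ := pair_lcs hln x y
  have hxm' : (⟨x, hxK⟩ : K) ^ m ∈ N.subgroupOf K := by
    rw [Subgroup.mem_subgroupOf]; simpa using hxm
  have hyn' : (⟨y, hyK⟩ : K) ^ n ∈ N.subgroupOf K := by
    rw [Subgroup.mem_subgroupOf]; simpa using hyn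
  obtain ⟨k, hk, hgk⟩ := key2' c key K ⟨x, hxK⟩ ⟨y, hyK⟩ hgen (N.subgroupOf K) m n hm hn
    hxm' hyn' hc ⁅(⟨x, hxK⟩ : K), ⟨y, hyK⟩⁆
    (Subgroup.commutator_mem_commutator (Subgroup.mem_top _) (Subgroup.mem_top _))
  refine ⟨k, hk, ?_⟩
  have h1 : K.subtype (⁅(⟨x, hxK⟩ : K), ⟨y, hyK⟩⁆ ^ k) ∈
      Subgroup.map K.subtype ⁅N.subgroupOf K, N.subgroupOf K⁆ :=
    Subgroup.mem_map_of_mem _ hgk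
  rw [Subgroup.map_commutator] at h1
  have h2 : Subgroup.map K.subtype (N.subgroupOf K) ≤ N := by
    rw [Subgroup.subgroupOf_map_subtype]; exact inf_le_left
  have h3 := Subgroup.commutator_mono h2 h2 h1
  have e : K.subtype (⁅(⟨x, hxK⟩ : K), ⟨y, hyK⟩⁆ ^ k) = ⁅x, y⁆ ^ k := by
    rw [map_pow, map_commutatorElement]; rfl
  rwa [e] at h3

def isoSub (hln : ∀ S : Finset G, Group.IsNilpotent (Subgroup.closure (S : Set G)))
    (N : Subgroup G) : Subgroup G where
  carrier := isolator N
  one_mem' := ⟨1, one_pos, by simpa using N.one_mem⟩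
  mul_mem' := fun hx hy => iso_mul hln hx hy
  inv_mem' := by
    rintro g ⟨k, hk, hgk⟩
    exact ⟨k, hk, by rw [inv_pow]; exact N.inv_mem hgk⟩

end GLevel


/-- if `G` is a torsion-free locally nilpotent group and `M ≤ G` has
`I_G(M) = G`, then `G^(i) ⊆ I_G(M^(i))` for all `i`; in particular if `M` is soluble of
derived length `d` then so is `G`. -/
theorem stmt_11 {G : Type*} [Group G] (htf : ∀ g : G, g ≠ 1 → ¬IsOfFinOrder g)
    (hln : ∀ S : Finset G, Group.IsNilpotent (Subgroup.closure (S : Set G)))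
    (M : Subgroup G) (hiso : isolator M = Set.univ) :
    (∀ i : ℕ, (derivedSeries G i : Set G) ⊆ isolator ((derivedSeries M i).map M.subtype)) ∧
    (∀ d : ℕ, derivedSeries M d = ⊥ → derivedSeries G d = ⊥) := by
  have part1 : ∀ i : ℕ,
      (derivedSeries G i : Set G) ⊆ isolator ((derivedSeries M i).map M.subtype) := by
    intro i
    induction i with
    | zero =>
        intro g _
        have e : (derivedSeries M 0).map M.subtype = M := by
          rw [derivedSeries_zero, ← MonoidHom.range_eq_map, Subgroup.range_subtype]
        rw [e, hiso]
        trivial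
    | succ i ih =>
        have hsub : derivedSeries G (i + 1) ≤
            isoSub hln ((derivedSeries M (i + 1)).map M.subtype) := by
          rw [derivedSeries_succ]
          refine Subgroup.commutator_le.mpr ?_
          intro g hg h hh
          have h1 := iso_comm hln (ih hg) (ih hh)
          have e : (derivedSeries M (i + 1)).map M.subtype =
              ⁅(derivedSeries M i).map M.subtype, (derivedSeries M i).map M.subtype⁆ := by
            rw [derivedSeries_succ, Subgroup.map_commutator]
          show ⁅g, h⁆ ∈ isolator ((derivedSeries M (i + 1)).map M.subtype)
          rw [e]
          exact h1
        exact fun g hg => hsub hg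
  refine ⟨part1, ?_⟩
  intro d hd
  have h1 := part1 d
  rw [hd, Subgroup.map_bot] at h1
  rw [eq_bot_iff]
  intro g hg
  obtain ⟨k, hk, hgk⟩ := h1 hg
  rw [Subgroup.mem_bot] at hgk
  rw [Subgroup.mem_bot]
  by_contra hne
  exact htf g hne (isOfFinOrder_iff_pow_eq_one.mpr ⟨k, hk, hgk⟩)
end

section
/- PSL(3,3) contains a solvable subgroup of derived length exactly 5, namely the image in PSL(3,3) of the group of matrices of the form [[a,b,c],[d,e,f],[0,0,g]] in SL(3,3); this subgroup has a normal elementary abelian 3-subgroup K with quotient isomorphic to GL(2,3). -/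
open Matrix
open scoped commutatorElement

namespace Stmt18Aux

abbrev Z3 := ZMod 3
abbrev SL33 := Matrix.SpecialLinearGroup (Fin 3) Z3
abbrev GL23 := GL (Fin 2) Z3
abbrev M2 := Matrix (Fin 2) (Fin 2) Z3

instance : DecidableEq SL33 := fun a b =>
  decidable_of_iff (a.val = b.val) Subtype.ext_iff.symm

/-! ### Quadruple arithmetic modelling 2×2 matrices over `ZMod 3` -/

abbrev Q4 := Z3 × Z3 × Z3 × Z3

def qmul : Q4 → Q4 → Q4 := fun ⟨a,b,c,d⟩ ⟨e,f,g,h⟩ =>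
  (a*e+b*g, a*f+b*h, c*e+d*g, c*f+d*h)
def qdet : Q4 → Z3 := fun ⟨a,b,c,d⟩ => a*d - b*c
def qadj : Q4 → Q4 := fun ⟨a,b,c,d⟩ => (d,-b,-c,a)
def qone : Q4 := (1,0,0,1)
def qpow4 (x : Q4) : Q4 := qmul (qmul (qmul x x) x) x
def qsq (x : Q4) : Q4 := qmul x x
def qcomm (x y : Q4) : Q4 := qmul (qmul (qmul x y) (qadj x)) (qadj y)

abbrev p1 (x : Q4) : Prop := qdet x = 1
abbrev p2 (x : Q4) : Prop := qpow4 x = qone ∧ qdet x = 1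
abbrev p3 (x : Q4) : Prop := qsq x = qone ∧ qdet x = 1

set_option maxRecDepth 40000
set_option maxHeartbeats 1000000

lemma F_p1mul : ∀ x y : Q4, p1 x → p1 y → p1 (qmul x y) := by decide
lemma F_p1adj : ∀ x : Q4, p1 x → p1 (qadj x) := by decide
lemma F_p1one : p1 qone := by decide
lemma F_p2mul : ∀ x y : Q4, p2 x → p2 y → p2 (qmul x y) := by decide
lemma F_p2adj : ∀ x : Q4, p2 x → p2 (qadj x) := by decide
lemma F_p2one : p2 qone := by decide
lemma F_p3mul : ∀ x y : Q4, p3 x → p3 y → p3 (qmul x y) := by decide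
lemma F_p3adj : ∀ x : Q4, p3 x → p3 (qadj x) := by decide
lemma F_p3one : p3 qone := by decide
lemma F_c12 : ∀ x y : Q4, p1 x → p1 y → p2 (qcomm x y) := by decide
lemma F_c23 : ∀ x y : Q4, p2 x → p2 y → p3 (qcomm x y) := by decide
lemma F_c3bot : ∀ x y : Q4, p3 x → p3 y → qcomm x y = qone := by
  have h : ∀ x y : Q4, p3 x → p3 y → (qcomm x y = qone ∧ True) := by decide
  exact fun x y hx hy => (h x y hx hy).1

/-! ### Bridge between `M2` and `Q4` -/

def toQ (A : M2) : Q4 := (A 0 0, A 0 1, A 1 0, A 1 1)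

lemma toQ_mul (A B : M2) : toQ (A*B) = qmul (toQ A) (toQ B) := by
  simp [toQ, qmul, Matrix.mul_apply, Fin.sum_univ_two]

lemma toQ_det (A : M2) : qdet (toQ A) = A.det := by
  rw [Matrix.det_fin_two]; rfl

lemma toQ_adj (A : M2) : toQ A.adjugate = qadj (toQ A) := by
  rw [Matrix.adjugate_fin_two]
  simp [toQ, qadj]

lemma toQ_one : toQ (1 : M2) = qone := by
  simp [toQ, qone]

lemma toQ_inj {A B : M2} (h : toQ A = toQ B) : A = B := by
  simp only [toQ, Prod.mk.injEq] at h
  rw [Matrix.eta_fin_two A, Matrix.eta_fin_two B, h.1, h.2.1, h.2.2.1, h.2.2.2]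

lemma toQ_pow4 (A : M2) : toQ (A^4) = qpow4 (toQ A) := by
  have h : A^4 = ((A*A)*A)*A := by
    rw [pow_succ, pow_succ, pow_succ, pow_one]
  rw [h, toQ_mul, toQ_mul, toQ_mul]; rfl

lemma toQ_sq (A : M2) : toQ (A^2) = qsq (toQ A) := by
  rw [sq, toQ_mul]; rfl

/-! ### Subgroups of `GL(2,3)` from decidable predicates -/

lemma val_inv_eq_adj (a : GL23) (h : qdet (toQ a.val) = 1) :
    ((a⁻¹ : GL23) : M2) = (a.val : M2).adjugate := by
  rw [toQ_det] at h
  rw [Matrix.coe_units_inv, Matrix.inv_def, h]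
  simp

def SP (p : Q4 → Prop) [DecidablePred p]
    (hdet : ∀ x, p x → qdet x = 1)
    (hmul : ∀ x y, p x → p y → p (qmul x y))
    (hadj : ∀ x, p x → p (qadj x))
    (hone : p qone) : Subgroup GL23 where
  carrier := {x : GL23 | p (toQ x.val)}
  mul_mem' := fun {a b} ha hb => by
    show p (toQ ((a*b : GL23) : M2))
    rw [Units.val_mul, toQ_mul]
    exact hmul _ _ ha hb
  one_mem' := by
    show p (toQ ((1 : GL23) : M2))
    rw [Units.val_one, toQ_one]; exact hone
  inv_mem' := fun {a} ha => by
    show p (toQ ((a⁻¹ : GL23) : M2))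
    rw [val_inv_eq_adj a (hdet _ ha), toQ_adj]
    exact hadj _ ha

def S1 : Subgroup GL23 := SP p1 (fun _ h => h) F_p1mul F_p1adj F_p1one
def S2 : Subgroup GL23 := SP p2 (fun _ h => h.2) F_p2mul F_p2adj F_p2one
def S3 : Subgroup GL23 := SP p3 (fun _ h => h.2) F_p3mul F_p3adj F_p3one

lemma mem_S1 (x : GL23) : x ∈ S1 ↔ p1 (toQ x.val) := Iff.rfl
lemma mem_S2 (x : GL23) : x ∈ S2 ↔ p2 (toQ x.val) := Iff.rfl
lemma mem_S3 (x : GL23) : x ∈ S3 ↔ p3 (toQ x.val) := Iff.rfl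

lemma comm_val (a b : GL23) (ha : qdet (toQ a.val) = 1) (hb : qdet (toQ b.val) = 1) :
    toQ (⁅a,b⁆ : GL23).val = qcomm (toQ a.val) (toQ b.val) := by
  rw [commutatorElement_def]
  rw [Units.val_mul, Units.val_mul, Units.val_mul,
    val_inv_eq_adj a ha, val_inv_eq_adj b hb,
    toQ_mul, toQ_mul, toQ_mul, toQ_adj, toQ_adj]
  rfl

lemma dGL1 : derivedSeries GL23 1 ≤ S1 := by
  rw [derivedSeries_succ, derivedSeries_zero]
  rw [Subgroup.commutator_le]
  intro a _ b _
  rw [mem_S1, p1, toQ_det]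
  have h1 : Matrix.GeneralLinearGroup.det (⁅a, b⁆ : GL23) = 1 := by
    rw [map_commutatorElement]
    exact commutatorElement_eq_one_iff_mul_comm.mpr (mul_comm _ _)
  have := congrArg Units.val h1
  rwa [Matrix.GeneralLinearGroup.val_det_apply] at this

lemma dGL2 : derivedSeries GL23 2 ≤ S2 := by
  rw [derivedSeries_succ]
  refine le_trans (Subgroup.commutator_mono dGL1 dGL1) ?_
  rw [Subgroup.commutator_le]
  intro a ha b hb
  rw [mem_S2, comm_val a b ha hb]
  exact F_c12 _ _ ha hb

lemma dGL3 : derivedSeries GL23 3 ≤ S3 := by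
  rw [derivedSeries_succ]
  refine le_trans (Subgroup.commutator_mono dGL2 dGL2) ?_
  rw [Subgroup.commutator_le]
  intro a ha b hb
  rw [mem_S3, comm_val a b ha.2 hb.2]
  exact F_c23 _ _ ha hb

lemma dGL4 : derivedSeries GL23 4 = ⊥ := by
  rw [eq_bot_iff, derivedSeries_succ]
  refine le_trans (Subgroup.commutator_mono dGL3 dGL3) ?_
  rw [Subgroup.commutator_le]
  intro a ha b hb
  rw [Subgroup.mem_bot]
  apply Units.ext
  apply toQ_inj
  rw [comm_val a b ha.2 hb.2, Units.val_one, toQ_one]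
  exact F_c3bot _ _ ha hb

/-! ### The subgroup `H₀` of `SL(3,3)` -/

def H0 : Subgroup SL33 where
  carrier := {A : SL33 | (A : Matrix (Fin 3) (Fin 3) Z3) 2 0 = 0 ∧
    (A : Matrix (Fin 3) (Fin 3) Z3) 2 1 = 0}
  mul_mem' := fun {a b} ha hb => by
    constructor <;>
    · show ((a : Matrix (Fin 3) (Fin 3) Z3) * b) _ _ = 0
      rw [Matrix.mul_apply, Fin.sum_univ_three, ha.1, ha.2]
      simp [hb.1, hb.2]
  one_mem' := by constructor <;> simp [Matrix.SpecialLinearGroup.coe_one]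
  inv_mem' := fun {a} ha => by
    constructor <;>
    · rw [Matrix.SpecialLinearGroup.coe_inv, Matrix.adjugate_fin_three]
      simp [ha.1, ha.2]

/-! ### The homomorphism `φ : H₀ →* GL(2,3)` -/

def blk (x : ↥H0) : M2 :=
  !![(x : SL33).val 0 0, (x : SL33).val 0 1;
     (x : SL33).val 1 0, (x : SL33).val 1 1]

lemma coe_coe_mul (x y : ↥H0) :
    ((x * y : ↥H0) : SL33).val = (x : SL33).val * (y : SL33).val := rfl

def blkf : ↥H0 →* M2 where
  toFun := blk
  map_one' := by
    have h : ((1 : ↥H0) : SL33).val = 1 := rfl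
    ext i j
    fin_cases i <;> fin_cases j <;> simp [blk, h, Matrix.one_apply]
  map_mul' := fun x y => by
    have h1 := y.prop.1
    have h2 := y.prop.2
    ext i j
    fin_cases i <;> fin_cases j <;>
      simp [blk, coe_coe_mul, Matrix.mul_apply, Fin.sum_univ_three,
        Fin.sum_univ_two, h1, h2]

lemma blkf_apply (x : ↥H0) : blkf x = blk x := rfl

def φ : ↥H0 →* GL23 := blkf.toHomUnits

lemma φ_val (x : ↥H0) : (φ x).val = blkf x := rfl

lemma blk_det (x : ↥H0) :
    (blkf x).det * (x : SL33).val 2 2 = 1 := by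
  have hd := (x : SL33).prop
  rw [Matrix.det_fin_three] at hd
  have hb : (blkf x).det = (x : SL33).val 0 0 * (x : SL33).val 1 1 -
      (x : SL33).val 0 1 * (x : SL33).val 1 0 := by
    rw [blkf_apply, Matrix.det_fin_two]
    simp [blk]
  have h1 := x.prop.1
  have h2 := x.prop.2
  rw [h1, h2] at hd
  rw [hb]
  linear_combination hd

lemma φ_surj : Function.Surjective φ := by
  intro u
  have hdet : (!![u.val 0 0, u.val 0 1, 0; u.val 1 0, u.val 1 1, 0;
      0, 0, ((u⁻¹ : GL23) : M2).det] : Matrix (Fin 3) (Fin 3) Z3).det = 1 := by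
    rw [Matrix.det_fin_three]
    have h : u.val.det * ((u⁻¹ : GL23) : M2).det = 1 := by
      rw [← Matrix.det_mul, ← Units.val_mul, mul_inv_cancel, Units.val_one, Matrix.det_one]
    rw [Matrix.det_fin_two] at h
    generalize hgen : ((u⁻¹ : GL23) : M2).det = d at h ⊢
    simp [Matrix.vecHead, Matrix.vecTail]
    linear_combination h
  refine ⟨⟨⟨!![u.val 0 0, u.val 0 1, 0; u.val 1 0, u.val 1 1, 0;
      0, 0, ((u⁻¹ : GL23) : M2).det], hdet⟩, ?_, ?_⟩, ?_⟩
  · rfl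
  · rfl
  · apply Units.ext
    rw [φ_val, blkf_apply]
    show !![_, _; _, _] = u.val
    conv_rhs => rw [Matrix.eta_fin_two u.val]
    rfl

/-! ### The kernel of `φ` -/

def uMat (c f : Z3) : Matrix (Fin 3) (Fin 3) Z3 := !![1,0,c;0,1,f;0,0,1]

lemma ker_form (x : ↥H0) (h : φ x = 1) :
    (x : SL33).val = uMat ((x : SL33).val 0 2) ((x : SL33).val 1 2) := by
  have hb : blkf x = 1 := by rw [← φ_val, h, Units.val_one]
  have e00 : (x : SL33).val 0 0 = 1 := by
    have := congrArg (fun M : M2 => M 0 0) hb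
    simpa [blkf_apply, blk, Matrix.one_apply] using this
  have e01 : (x : SL33).val 0 1 = 0 := by
    have := congrArg (fun M : M2 => M 0 1) hb
    simpa [blkf_apply, blk, Matrix.one_apply] using this
  have e10 : (x : SL33).val 1 0 = 0 := by
    have := congrArg (fun M : M2 => M 1 0) hb
    simpa [blkf_apply, blk, Matrix.one_apply] using this
  have e11 : (x : SL33).val 1 1 = 1 := by
    have := congrArg (fun M : M2 => M 1 1) hb
    simpa [blkf_apply, blk, Matrix.one_apply] using this
  have h22 : (x : SL33).val 2 2 = 1 := by
    have hd := blk_det x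
    have hb2 : (blkf x).det = (x : SL33).val 0 0 * (x : SL33).val 1 1 -
        (x : SL33).val 0 1 * (x : SL33).val 1 0 := by
      rw [blkf_apply, Matrix.det_fin_two]
      simp [blk]
    rw [hb2, e00, e01, e10, e11] at hd
    linear_combination hd
  have h1 := x.prop.1
  have h2 := x.prop.2
  ext i j
  fin_cases i <;> fin_cases j <;>
    simp [uMat, Matrix.vecHead, Matrix.vecTail, e00, e01, e10, e11, h22, h1, h2]

lemma uMat_mul (c f c' f' : Z3) :
    uMat c f * uMat c' f' = uMat (c+c') (f+f') := by
  ext i j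
  fin_cases i <;> fin_cases j <;>
    simp [uMat, Matrix.mul_apply, Fin.sum_univ_three, Matrix.vecHead, Matrix.vecTail] <;>
    ring

lemma uMat_zero : uMat 0 0 = 1 := by decide

lemma three_smul (a : Z3) : a + a + a = 0 := by
  have h3 : (3 : Z3) = 0 := rfl
  linear_combination a * h3

lemma ker_pow3 (x : ↥H0) (h : φ x = 1) : x ^ 3 = 1 := by
  apply Subtype.ext; apply Subtype.ext
  have hx := ker_form x h
  show ((x ^ 3 : ↥H0) : SL33).val = 1
  have hc : ((x ^ 3 : ↥H0) : SL33).val = ((x : SL33).val) ^ 3 := by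
    rw [SubgroupClass.coe_pow, Matrix.SpecialLinearGroup.coe_pow]
  rw [hc, hx, pow_succ, pow_succ, pow_one, uMat_mul, uMat_mul, three_smul, three_smul,
    uMat_zero]

lemma ker_comm (x y : ↥H0) (hx : φ x = 1) (hy : φ y = 1) : x * y = y * x := by
  apply Subtype.ext; apply Subtype.ext
  show ((x : SL33).val) * ((y : SL33).val) = ((y : SL33).val) * ((x : SL33).val)
  rw [ker_form x hx, ker_form y hy, uMat_mul, uMat_mul, add_comm, add_comm
    ((y : SL33).val 1 2)]

/-! ### Derived series of `H₀` -/

lemma d_step {G : Type*} [Group G] {n : ℕ} {a b : G}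
    (ha : a ∈ derivedSeries G n) (hb : b ∈ derivedSeries G n) :
    ⁅a,b⁆ ∈ derivedSeries G (n+1) := by
  rw [derivedSeries_succ]
  exact Subgroup.commutator_mem_commutator ha hb

lemma dH0_4_le : derivedSeries ↥H0 4 ≤ φ.ker := by
  have hmap := map_derivedSeries_eq φ_surj 4
  rw [dGL4] at hmap
  exact (Subgroup.map_eq_bot_iff _).mp hmap

lemma dH0_5 : derivedSeries ↥H0 5 = ⊥ := by
  rw [eq_bot_iff, derivedSeries_succ]
  refine le_trans (Subgroup.commutator_mono dH0_4_le dH0_4_le) ?_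
  rw [Subgroup.commutator_le]
  intro a ha b hb
  rw [Subgroup.mem_bot]
  exact commutatorElement_eq_one_iff_mul_comm.mpr (ker_comm a b ha hb)

/-! ### Witness element of the 4th derived subgroup -/

def mk0 (M : Matrix (Fin 3) (Fin 3) Z3) (h : M.det = 1 := by decide)
    (h2 : M 2 0 = 0 ∧ M 2 1 = 0 := by decide) : ↥H0 := ⟨⟨M, h⟩, h2⟩

def g0 : ↥H0 := mk0 !![2,2,1;0,2,2;0,0,1]
def g1 : ↥H0 := mk0 !![2,2,2;1,2,1;0,0,2]
def g2 : ↥H0 := mk0 !![0,2,2;1,1,1;0,0,1]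
def g3 : ↥H0 := mk0 !![2,1,2;1,0,1;0,0,2]
def g4 : ↥H0 := mk0 !![1,1,0;1,0,2;0,0,2]
def g5 : ↥H0 := mk0 !![1,0,0;2,2,1;0,0,2]
def g6 : ↥H0 := mk0 !![2,0,2;1,1,1;0,0,2]
def g7 : ↥H0 := mk0 !![2,1,0;2,0,0;0,0,1]
def g8 : ↥H0 := mk0 !![1,2,2;2,0,1;0,0,2]
def g9 : ↥H0 := mk0 !![2,2,0;1,2,1;0,0,2]
def g10 : ↥H0 := mk0 !![2,0,0;2,1,0;0,0,2]
def g11 : ↥H0 := mk0 !![1,2,1;1,1,1;0,0,2]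
def g12 : ↥H0 := mk0 !![2,2,1;0,1,2;0,0,2]
def g13 : ↥H0 := mk0 !![1,2,1;2,2,2;0,0,1]
def g14 : ↥H0 := mk0 !![1,1,0;1,0,2;0,0,2]
def g15 : ↥H0 := mk0 !![1,0,0;2,2,1;0,0,2]

def w : ↥H0 :=
  ⁅⁅⁅⁅g0,g1⁆,⁅g2,g3⁆⁆,⁅⁅g4,g5⁆,⁅g6,g7⁆⁆⁆,⁅⁅⁅g8,g9⁆,⁅g10,g11⁆⁆,⁅⁅g12,g13⁆,⁅g14,g15⁆⁆⁆⁆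

lemma w_mem : w ∈ derivedSeries ↥H0 4 := by
  have h0 : ∀ g : ↥H0, g ∈ derivedSeries ↥H0 0 := fun g => Subgroup.mem_top g
  exact d_step (d_step (d_step (d_step (h0 g0) (h0 g1)) (d_step (h0 g2) (h0 g3)))
      (d_step (d_step (h0 g4) (h0 g5)) (d_step (h0 g6) (h0 g7))))
    (d_step (d_step (d_step (h0 g8) (h0 g9)) (d_step (h0 g10) (h0 g11)))
      (d_step (d_step (h0 g12) (h0 g13)) (d_step (h0 g14) (h0 g15))))

lemma w_ne_one : w ≠ 1 := by
  intro h
  have hv : (w : SL33) = 1 := congrArg Subtype.val h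
  revert hv
  decide

lemma dH0_4_ne : derivedSeries ↥H0 4 ≠ ⊥ := by
  intro h
  exact w_ne_one (Subgroup.mem_bot.mp (h ▸ w_mem))

/-! ### The centre of `SL(3,3)` is trivial -/

lemma center_bot : Subgroup.center SL33 = ⊥ := by
  refine le_antisymm ?_ bot_le
  intro x hx
  obtain ⟨r, hr, hs⟩ := Matrix.SpecialLinearGroup.mem_center_iff.mp hx
  rw [Fintype.card_fin] at hr
  haveI : Fact (Nat.Prime 3) := ⟨by norm_num⟩
  have hr1 : r = 1 := by rw [← ZMod.pow_card r]; exact hr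
  rw [Subgroup.mem_bot]
  apply Subtype.ext
  rw [← hs, hr1]
  simp

end Stmt18Aux

/-- `PSL(3,3)`: the quotient of `SL(3,3)` by its centre. -/
abbrev PSL33 :=
  Matrix.SpecialLinearGroup (Fin 3) (ZMod 3) ⧸
    Subgroup.center (Matrix.SpecialLinearGroup (Fin 3) (ZMod 3))

namespace Stmt18Aux

abbrev ι : SL33 →* PSL33 := QuotientGroup.mk' (Subgroup.center SL33)

lemma ι_inj : Function.Injective ι := by
  rw [← MonoidHom.ker_eq_bot_iff]
  rw [QuotientGroup.ker_mk']
  exact center_bot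

abbrev Hfull : Subgroup PSL33 := H0.map ι

noncomputable def e : ↥H0 ≃* ↥Hfull := Subgroup.equivMapOfInjective H0 ι ι_inj

end Stmt18Aux

open Stmt18Aux in
/-- `PSL(3,3)` contains a soluble subgroup of derived length exactly `5`,
namely the image of the stabilizer of a plane (the block upper triangular matrices
`[[a,b,c],[d,e,f],[0,0,g]]` in `SL(3,3)`); it has a normal elementary abelian `3`-subgroup
`K` with quotient isomorphic to `GL(2,3)`. -/
theorem stmt_18 :
    ∃ H : Subgroup PSL33,
      (∀ x : PSL33, x ∈ H ↔ ∃ A : Matrix.SpecialLinearGroup (Fin 3) (ZMod 3),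
        QuotientGroup.mk A = x ∧ (A : Matrix (Fin 3) (Fin 3) (ZMod 3)) 2 0 = 0 ∧
          (A : Matrix (Fin 3) (Fin 3) (ZMod 3)) 2 1 = 0) ∧
      derivedSeries H 5 = ⊥ ∧ derivedSeries H 4 ≠ ⊥ ∧
      ∃ (K : Subgroup H) (hK : K.Normal),
        (∀ x ∈ K, x ^ 3 = 1) ∧ (∀ a ∈ K, ∀ b ∈ K, a * b = b * a) ∧
        (letI := hK; Nonempty ((H ⧸ K) ≃* GL (Fin 2) (ZMod 3))) := by
  refine ⟨Hfull, ?_, ?_, ?_, ?_⟩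
  · intro x
    rw [Subgroup.mem_map]
    constructor
    · rintro ⟨A, hA, rfl⟩
      exact ⟨A, rfl, hA.1, hA.2⟩
    · rintro ⟨A, rfl, h1, h2⟩
      exact ⟨A, ⟨h1, h2⟩, rfl⟩
  · have hmap := map_derivedSeries_eq (f := e.toMonoidHom) e.surjective 5
    rw [← hmap, dH0_5, Subgroup.map_bot]
  · intro h
    have hmap := map_derivedSeries_eq (f := e.toMonoidHom) e.surjective 4
    rw [h] at hmap
    have hker : (e.toMonoidHom).ker = ⊥ :=
      (MonoidHom.ker_eq_bot_iff _).mpr e.injective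
    have := (Subgroup.map_eq_bot_iff _).mp hmap
    rw [hker, le_bot_iff] at this
    exact dH0_4_ne this
  · refine ⟨(φ.comp e.symm.toMonoidHom).ker, MonoidHom.normal_ker _, ?_, ?_, ?_⟩
    · intro x hx
      have h : φ (e.symm x) = 1 := hx
      have h3 := ker_pow3 (e.symm x) h
      have := congrArg e h3
      rwa [_root_.map_pow, MulEquiv.apply_symm_apply, _root_.map_one] at this
    · intro a ha b hb
      have h := ker_comm (e.symm a) (e.symm b) ha hb
      have := congrArg e h
      rwa [_root_.map_mul, _root_.map_mul, MulEquiv.apply_symm_apply, MulEquiv.apply_symm_apply] at this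
    · exact ⟨QuotientGroup.quotientKerEquivOfSurjective _
        (φ_surj.comp e.symm.surjective)⟩
end
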